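/- arXiv:1110.5766 — 5 statements merged into one kernel-verified Lean document; each statement's English description precedes it below -/
import Mathlib

section
/- Let Ξ be a 1-separated set in a geometrically doubling quasi-metric space with quasi-triangle constant A₀, and let c > 0 and 0 < c' < c/A₀. Then there exists C < ∞ such that for all α, γ ∈ X: Σ_{β∈Ξ} exp(−c·d(α,β)) exp(−c·d(β,γ)) ≤ C exp(−c'·d(α,γ)). -/
/-- `S` is an `r`-separated subset for the quasi-distance `d`. -/
def Separated {X : Type*} (d : X → X → ℝ) (r : ℝ) (S : Set X) : Prop :=
  ∀ a ∈ S, ∀ b ∈ S, a ≠ b → r ≤ d a b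

/-- Geometric doubling with constant `N`. -/
def GeomDoubling {X : Type*} (d : X → X → ℝ) (N : ℕ) : Prop :=
  ∀ (x : X) (r : ℝ) (S : Finset X), (∀ y ∈ S, d x y < r) →
    (∀ a ∈ S, ∀ b ∈ S, a ≠ b → r / 2 < d a b) → S.card ≤ N

/-- Counting lemma: a `1`-separated finite set inside a quasi-ball of radius `(3/2)^k`
has at most `N^(k+1)` points. -/
lemma counting_lemma {X : Type*} (d : X → X → ℝ) (N : ℕ)
    (hsymm : ∀ x y, d x y = d y x)
    (hzero : ∀ x y, d x y = 0 ↔ x = y)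
    (hdoub : GeomDoubling d N) :
    ∀ (k : ℕ) (x : X) (F : Finset X),
      (∀ a ∈ F, ∀ b ∈ F, a ≠ b → 1 ≤ d a b) →
      (∀ y ∈ F, d x y ≤ (3/2 : ℝ) ^ k) → F.card ≤ N ^ (k + 1) := by
  classical
  intro k
  induction k with
  | zero =>
    intro x F hsep hball
    have h := hdoub x (3/2) F
      (fun y hy => lt_of_le_of_lt (by simpa using hball y hy) (by norm_num))
      (fun a ha b hb hab => by have := hsep a ha b hb hab; linarith)
    simpa using h
  | succ k ih =>
    intro x F hsep hball
    have hpowpos : (0:ℝ) < (3/2:ℝ) ^ k := by positivity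
    have hne : (F.powerset.filter fun T =>
        ∀ a ∈ T, ∀ b ∈ T, a ≠ b → (3/2:ℝ)^k < d a b).Nonempty := ⟨∅, by simp⟩
    obtain ⟨T, hTmem, hTmax⟩ := Finset.exists_max_image _ Finset.card hne
    simp only [Finset.mem_filter, Finset.mem_powerset] at hTmem
    obtain ⟨hTF, hTsep⟩ := hTmem
    have hTcard : T.card ≤ N := by
      apply hdoub x (2 * (3/2:ℝ)^k) T
      · intro y hy
        have h1 := hball y (hTF hy)
        rw [pow_succ] at h1
        nlinarith
      · intro a ha b hb hab
        have := hTsep a ha b hb hab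
        linarith
    have hcover : ∀ y ∈ F, ∃ t ∈ T, d t y ≤ (3/2:ℝ)^k := by
      intro y hy
      by_cases hyT : y ∈ T
      · exact ⟨y, hyT, by rw [(hzero y y).mpr rfl]; positivity⟩
      · by_contra hcon
        push_neg at hcon
        have hins : insert y T ∈ F.powerset.filter fun T =>
            ∀ a ∈ T, ∀ b ∈ T, a ≠ b → (3/2:ℝ)^k < d a b := by
          simp only [Finset.mem_filter, Finset.mem_powerset]
          refine ⟨Finset.insert_subset hy hTF, ?_⟩
          intro a ha b hb hab
          rcases Finset.mem_insert.mp ha with rfl | haT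
          · rcases Finset.mem_insert.mp hb with rfl | hbT
            · exact absurd rfl hab
            · rw [hsymm]; exact hcon b hbT
          · rcases Finset.mem_insert.mp hb with rfl | hbT
            · exact hcon a haT
            · exact hTsep a haT b hbT hab
        have := hTmax _ hins
        rw [Finset.card_insert_of_notMem hyT] at this
        omega
    have hsub : F ⊆ T.biUnion (fun t => F.filter fun y => d t y ≤ (3/2:ℝ)^k) := by
      intro y hy
      obtain ⟨t, htT, htd⟩ := hcover y hy
      exact Finset.mem_biUnion.mpr ⟨t, htT, Finset.mem_filter.mpr ⟨hy, htd⟩⟩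
    calc F.card ≤ (T.biUnion (fun t => F.filter fun y => d t y ≤ (3/2:ℝ)^k)).card :=
          Finset.card_le_card hsub
      _ ≤ ∑ t ∈ T, (F.filter fun y => d t y ≤ (3/2:ℝ)^k).card := Finset.card_biUnion_le
      _ ≤ ∑ _t ∈ T, N ^ (k + 1) := by
          refine Finset.sum_le_sum fun t _ => ih t _ ?_ ?_
          · intro a ha b hb hab
            exact hsep a (Finset.mem_of_mem_filter _ ha) b (Finset.mem_of_mem_filter _ hb) hab
          · intro y hy
            exact (Finset.mem_filter.mp hy).2
      _ = T.card * N ^ (k + 1) := by rw [Finset.sum_const, smul_eq_mul]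
      _ ≤ N * N ^ (k + 1) := Nat.mul_le_mul_right _ hTcard
      _ = N ^ (k + 1 + 1) := by ring

/-- convolution-type bound for sums of exponentials over a `1`-separated set. -/
theorem exp_product_sum_bound {X : Type*} (d : X → X → ℝ) (A : ℝ) (N : ℕ)
    (hA : 1 ≤ A)
    (hnn : ∀ x y, 0 ≤ d x y)
    (hsymm : ∀ x y, d x y = d y x)
    (hzero : ∀ x y, d x y = 0 ↔ x = y)
    (htri : ∀ x y z, d x y ≤ A * (d x z + d z y))
    (hdoub : GeomDoubling d N)
    (Ξ : Set X) (hΞ : Separated d 1 Ξ)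
    (c c' : ℝ) (hc : 0 < c) (hc'pos : 0 < c') (hc' : c' < c / A) :
    ∃ C : ℝ, ∀ α γ : X,
      (∑' β : Ξ, Real.exp (-(c * d α β)) * Real.exp (-(c * d (β : X) γ)))
        ≤ C * Real.exp (-(c' * d α γ)) := by
  classical
  have hA0 : (0:ℝ) < A := lt_of_lt_of_le one_pos hA
  set ε := c - A * c' with hεdef
  have hεpos : 0 < ε := by
    have h := (lt_div_iff₀ hA0).mp hc'
    rw [hεdef]; nlinarith
  set a : ℕ → ℝ := fun k =>
    (N:ℝ)^(k+1) * (Real.exp ε * Real.exp (-(ε * (2/3 * (3/2:ℝ)^k)))) with ha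
  have ha_nonneg : ∀ k, 0 ≤ a k := fun k => by
    rw [ha]; positivity
  have hsumm : Summable a := by
    apply summable_of_ratio_norm_eventually_le (r := 1/2) (by norm_num)
    have htend : Filter.Tendsto (fun k : ℕ => (N:ℝ) * Real.exp (-(ε/3 * (3/2:ℝ)^k)))
        Filter.atTop (nhds 0) := by
      have h1 : Filter.Tendsto (fun k : ℕ => (3/2:ℝ)^k) Filter.atTop Filter.atTop :=
        tendsto_pow_atTop_atTop_of_one_lt (by norm_num)
      have h2 : Filter.Tendsto (fun k : ℕ => ε/3 * (3/2:ℝ)^k) Filter.atTop Filter.atTop :=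
        h1.const_mul_atTop (by positivity)
      have h3 : Filter.Tendsto (fun k : ℕ => -(ε/3 * (3/2:ℝ)^k)) Filter.atTop Filter.atBot :=
        Filter.tendsto_neg_atBot_iff.mpr h2
      have h4 : Filter.Tendsto (fun k : ℕ => Real.exp (-(ε/3 * (3/2:ℝ)^k)))
          Filter.atTop (nhds 0) := Real.tendsto_exp_atBot.comp h3
      simpa using h4.const_mul (N:ℝ)
    filter_upwards [htend.eventually_lt_const (by norm_num : (0:ℝ) < 1/2)] with k hk
    have key : a (k+1) = ((N:ℝ) * Real.exp (-(ε/3 * (3/2:ℝ)^k))) * a k := by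
      have e1 : -(ε * (2/3 * (3/2:ℝ)^(k+1)))
          = -(ε/3 * (3/2:ℝ)^k) + -(ε * (2/3 * (3/2:ℝ)^k)) := by
        rw [pow_succ]; ring
      rw [ha]
      simp only
      rw [e1, Real.exp_add, pow_succ (N:ℝ) (k+1)]
      ring
    rw [Real.norm_eq_abs, Real.norm_eq_abs, abs_of_nonneg (ha_nonneg _),
      abs_of_nonneg (ha_nonneg _), key]
    exact mul_le_mul_of_nonneg_right hk.le (ha_nonneg k)
  have hCnn : 0 ≤ ∑' k, a k := tsum_nonneg ha_nonneg
  refine ⟨∑' k, a k, ?_⟩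
  intro α γ
  apply tsum_le_of_sum_le' (mul_nonneg hCnn (Real.exp_nonneg _))
  intro F
  have hex : ∀ β : Ξ, ∃ k : ℕ, d α β ≤ (3/2:ℝ)^k := by
    intro β
    obtain ⟨n, hn⟩ := pow_unbounded_of_one_lt (d α β) (by norm_num : (1:ℝ) < 3/2)
    exact ⟨n, hn.le⟩
  set g : Ξ → ℕ := fun β => Nat.find (hex β) with hg
  have step1 : ∀ β : Ξ,
      Real.exp (-(c * d α β)) * Real.exp (-(c * d (β:X) γ))
        ≤ Real.exp (-(c' * d α γ)) * Real.exp (-(ε * d α β)) := by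
    intro β
    rw [← Real.exp_add, ← Real.exp_add]
    apply Real.exp_le_exp.mpr
    have h1 := htri α γ (β:X)
    have h2 := hnn (β:X) γ
    have h3 := hnn α (β:X)
    have h4 : c' * d α γ ≤ c' * (A * (d α (β:X) + d (β:X) γ)) :=
      mul_le_mul_of_nonneg_left h1 hc'pos.le
    rw [hεdef]
    nlinarith
  have fiber_bound : ∀ k : ℕ,
      ∑ β ∈ F.filter (fun β => g β = k), Real.exp (-(ε * d α β)) ≤ a k := by
    intro k
    set b : ℝ := Real.exp ε * Real.exp (-(ε * (2/3 * (3/2:ℝ)^k))) with hb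
    have hle : ∀ β ∈ F.filter (fun β => g β = k), Real.exp (-(ε * d α β)) ≤ b := by
      intro β hβ
      have hgβ : g β = k := by
        have := (Finset.mem_filter.mp hβ).2
        simpa using this
      rw [hb, ← Real.exp_add]
      apply Real.exp_le_exp.mpr
      rcases Nat.eq_zero_or_pos k with hk0 | hkpos
      · subst hk0
        have := hnn α (β:X)
        have hεd : 0 ≤ ε * d α (β:X) := mul_nonneg hεpos.le this
        nlinarith
      · obtain ⟨j, rfl⟩ : ∃ j, k = j + 1 := ⟨k - 1, by omega⟩
        have hmin : ¬ d α (β:X) ≤ (3/2:ℝ)^j := by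
          have hlt : j < Nat.find (hex β) := by
            have h' : Nat.find (hex β) = j + 1 := hgβ
            omega
          exact Nat.find_min (hex β) hlt
        push_neg at hmin
        have hp : (2:ℝ)/3 * (3/2:ℝ)^(j+1) = (3/2:ℝ)^j := by
          rw [pow_succ]; ring
        rw [hp]
        nlinarith
    have hbnn : 0 ≤ b := by rw [hb]; positivity
    have hcard : ((F.filter (fun β => g β = k)).card : ℝ) ≤ (N:ℝ)^(k+1) := by
      set S := F.filter (fun β => g β = k) with hS
      have hcard_eq : (S.image (Subtype.val : Ξ → X)).card = S.card :=
        Finset.card_image_of_injective _ Subtype.val_injective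
      have hcount := counting_lemma d N hsymm hzero hdoub k α
        (S.image (Subtype.val : Ξ → X))
        (by
          intro p hp q hq hpq
          obtain ⟨βp, _, rfl⟩ := Finset.mem_image.mp hp
          obtain ⟨βq, _, rfl⟩ := Finset.mem_image.mp hq
          exact hΞ _ βp.2 _ βq.2 hpq)
        (by
          intro y hy
          obtain ⟨β, hβS, rfl⟩ := Finset.mem_image.mp hy
          have hgβ : g β = k := by
            have := (Finset.mem_filter.mp (hS ▸ hβS)).2
            simpa using this
          have hspec := Nat.find_spec (hex β)
          rw [hg] at hgβ
          rw [← hgβ]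
          exact hspec)
      rw [hcard_eq] at hcount
      calc (S.card : ℝ) ≤ ((N ^ (k+1) : ℕ) : ℝ) := by exact_mod_cast hcount
        _ = (N:ℝ)^(k+1) := by push_cast; ring
    calc ∑ β ∈ F.filter (fun β => g β = k), Real.exp (-(ε * d α β))
        ≤ (F.filter (fun β => g β = k)).card • b :=
          Finset.sum_le_card_nsmul _ _ _ hle
      _ = ((F.filter (fun β => g β = k)).card : ℝ) * b := nsmul_eq_mul _ _
      _ ≤ (N:ℝ)^(k+1) * b := mul_le_mul_of_nonneg_right hcard hbnn
      _ = a k := by rw [ha, hb]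
  calc ∑ β ∈ F, Real.exp (-(c * d α β)) * Real.exp (-(c * d (β:X) γ))
      ≤ ∑ β ∈ F, Real.exp (-(c' * d α γ)) * Real.exp (-(ε * d α β)) :=
        Finset.sum_le_sum fun β _ => step1 β
    _ = Real.exp (-(c' * d α γ)) * ∑ β ∈ F, Real.exp (-(ε * d α β)) := by
        rw [Finset.mul_sum]
    _ ≤ Real.exp (-(c' * d α γ)) * ∑' k, a k := by
        apply mul_le_mul_of_nonneg_left _ (Real.exp_nonneg _)
        calc ∑ β ∈ F, Real.exp (-(ε * d α β))
            = ∑ k ∈ F.image g, ∑ β ∈ F.filter (fun β => g β = k),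
                Real.exp (-(ε * d α β)) :=
              (Finset.sum_fiberwise_of_maps_to
                (fun β hβ => Finset.mem_image_of_mem g hβ) _).symm
          _ ≤ ∑ k ∈ F.image g, a k := Finset.sum_le_sum fun k _ => fiber_bound k
          _ ≤ ∑' k, a k := Summable.sum_le_tsum _ (fun k _ => ha_nonneg k) hsumm
    _ = (∑' k, a k) * Real.exp (-(c' * d α γ)) := mul_comm _ _
end

section
/- Let κₙ be the best constant such that d(α₀, αₙ) ≤ κₙ (d(α₀,α₁) + d(α₁,α₂) + … + d(α_{n-1},αₙ)) for all chains of n+1 points in X. Then κₙ ≤ A₀ · n^{log₂ A₀} for all n ≥ 1. -/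
private lemma chain_pow_bound {X : Type*} (d : X → X → ℝ) (A : ℝ)
    (hA : 1 ≤ A)
    (hnn : ∀ x y, 0 ≤ d x y)
    (htri : ∀ x y z, d x y ≤ A * (d x z + d z y)) :
    ∀ j : ℕ, ∀ n : ℕ, 1 ≤ n → n ≤ 2 ^ j → ∀ α : ℕ → X,
      d (α 0) (α n) ≤ A ^ j * ∑ i ∈ Finset.range n, d (α i) (α (i + 1)) := by
  intro j
  induction j with
  | zero =>
    intro n h1 h2 α
    have : n = 1 := by omega
    subst this
    simp
  | succ j ih =>
    intro n h1 h2 α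
    have hS : 0 ≤ ∑ i ∈ Finset.range n, d (α i) (α (i + 1)) :=
      Finset.sum_nonneg fun i _ => hnn _ _
    by_cases hle : n ≤ 2 ^ j
    · calc d (α 0) (α n) ≤ A ^ j * ∑ i ∈ Finset.range n, d (α i) (α (i + 1)) :=
            ih n h1 hle α
        _ ≤ A ^ (j + 1) * ∑ i ∈ Finset.range n, d (α i) (α (i + 1)) := by
            apply mul_le_mul_of_nonneg_right _ hS
            exact pow_le_pow_right₀ hA (by omega)
    · push_neg at hle
      set m : ℕ := 2 ^ j with hm
      set k : ℕ := n - m with hk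
      have hn : n = m + k := by
        have : 0 < m := Nat.two_pow_pos j
        omega
      have hk1 : 1 ≤ k := by omega
      have hk2 : k ≤ 2 ^ j := by
        have : n ≤ 2 ^ (j + 1) := h2
        have : 2 ^ (j + 1) = 2 * 2 ^ j := by ring
        omega
      have h1' : d (α 0) (α m) ≤ A ^ j * ∑ i ∈ Finset.range m, d (α i) (α (i + 1)) :=
        ih m (Nat.one_le_two_pow) le_rfl α
      have h2' : d (α m) (α n) ≤ A ^ j * ∑ i ∈ Finset.range k, d (α (m + i)) (α (m + i + 1)) := by
        have := ih k hk1 hk2 (fun i => α (m + i))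
        simpa [hn, Nat.add_assoc] using this
      have hsplit : ∑ i ∈ Finset.range n, d (α i) (α (i + 1)) =
          (∑ i ∈ Finset.range m, d (α i) (α (i + 1))) +
          ∑ i ∈ Finset.range k, d (α (m + i)) (α (m + i + 1)) := by
        rw [hn, Finset.sum_range_add]
      have hA0 : (0:ℝ) ≤ A := le_trans zero_le_one hA
      calc d (α 0) (α n) ≤ A * (d (α 0) (α m) + d (α m) (α n)) := htri _ _ _
        _ ≤ A * (A ^ j * (∑ i ∈ Finset.range m, d (α i) (α (i + 1)))
              + A ^ j * ∑ i ∈ Finset.range k, d (α (m + i)) (α (m + i + 1))) := by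
            apply mul_le_mul_of_nonneg_left (add_le_add h1' h2') hA0
        _ = A ^ (j + 1) * ∑ i ∈ Finset.range n, d (α i) (α (i + 1)) := by
            rw [hsplit]; ring

/-- the best chain constant `κₙ` of a quasi-metric space satisfies
`κₙ ≤ A₀ · n^{log₂ A₀}`, i.e. every chain of `n+1` points satisfies the
corresponding generalized triangle inequality. -/
theorem chain_constant_bound {X : Type*} (d : X → X → ℝ) (A : ℝ)
    (hA : 1 ≤ A)
    (hnn : ∀ x y, 0 ≤ d x y)
    (hsymm : ∀ x y, d x y = d y x)
    (hzero : ∀ x y, d x y = 0 ↔ x = y)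
    (htri : ∀ x y z, d x y ≤ A * (d x z + d z y)) :
    ∀ n : ℕ, 1 ≤ n → ∀ α : ℕ → X,
      d (α 0) (α n) ≤ A * (n : ℝ) ^ (Real.logb 2 A) *
        ∑ j ∈ Finset.range n, d (α j) (α (j + 1)) := by
  intro n hn α
  have hA0 : (0:ℝ) < A := lt_of_lt_of_le one_pos hA
  have hn0 : (0:ℝ) < (n:ℝ) := by exact_mod_cast hn
  set j : ℕ := Nat.clog 2 n with hj
  have hnj : n ≤ 2 ^ j := Nat.le_pow_clog (by norm_num) n
  have hkey := chain_pow_bound d A hA hnn htri j n hn hnj α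
  have hS : 0 ≤ ∑ i ∈ Finset.range n, d (α i) (α (i + 1)) :=
    Finset.sum_nonneg fun i _ => hnn _ _
  refine le_trans hkey (mul_le_mul_of_nonneg_right ?_ hS)
  -- show A ^ j ≤ A * n ^ logb 2 A
  have hexp : (j : ℝ) ≤ 1 + Real.logb 2 n := by
    rcases eq_or_lt_of_le hn with h | h
    · have : j = 0 := by rw [hj, ← h]; simp
      rw [this]
      have : (0:ℝ) ≤ Real.logb 2 n := Real.logb_nonneg (by norm_num) (by exact_mod_cast hn)
      push_cast; linarith
    · have hn2 : 2 ≤ n := h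
      have hj1 : 1 ≤ j := Nat.clog_pos (by norm_num) hn2
      have hlt : 2 ^ (j - 1) < n := Nat.pow_pred_clog_lt_self (by norm_num) hn2
      have hlt' : ((j - 1 : ℕ) : ℝ) < Real.logb 2 n := by
        rw [Real.lt_logb_iff_rpow_lt (by norm_num) hn0, Real.rpow_natCast]
        exact_mod_cast hlt
      have : ((j - 1 : ℕ) : ℝ) = (j : ℝ) - 1 := by
        push_cast [hj1]; ring
      linarith [this ▸ hlt']
  have hAA : (n:ℝ) ^ Real.logb 2 A = A ^ Real.logb 2 (n:ℝ) := by
    rw [Real.rpow_def_of_pos hn0, Real.rpow_def_of_pos hA0, Real.logb, Real.logb]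
    ring_nf
  calc A ^ j = A ^ (j : ℝ) := (Real.rpow_natCast A j).symm
    _ ≤ A ^ (1 + Real.logb 2 n) := Real.rpow_le_rpow_of_exponent_le hA hexp
    _ = A * (n : ℝ) ^ Real.logb 2 A := by
        rw [Real.rpow_add hA0, Real.rpow_one, hAA]
end

section
/- Let μ be a doubling Borel measure on a quasi-metric space (X,d) with quasi-triangle constant A₀. For every x ∈ X and R > r > 0, at least one of the following holds: μ(B(x,R)) ≥ (1+ε)μ(B(x,r)) with ε = 1/C_μ(3A₀²), or the annulus B(x, R/(2A₀)) \ B(x, 2A₀r) is empty. -/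
open MeasureTheory
open scoped ENNReal NNReal

/-- dichotomy for a doubling measure: either the measure of the bigger ball
grows by the factor `1 + ε` with `ε = 1/C_μ(3A₀²)`, or a suitable annulus is empty. -/
theorem doubling_dichotomy {X : Type*} [MeasurableSpace X]
    (d : X → X → ℝ) (A : ℝ) (μ : Measure X)
    (hA : 1 ≤ A)
    (hnn : ∀ x y, 0 ≤ d x y)
    (hsymm : ∀ x y, d x y = d y x)
    (hzero : ∀ x y, d x y = 0 ↔ x = y)
    (htri : ∀ x y z, d x y ≤ A * (d x z + d z y))
    (hballs : ∀ (x : X) (r : ℝ), MeasurableSet {y | d x y < r})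
    (hpos : ∀ (x : X) (r : ℝ), 0 < r → 0 < μ {y | d x y < r})
    (hfin : ∀ (x : X) (r : ℝ), 0 < r → μ {y | d x y < r} < ⊤)
    (Cμ3 : ℝ≥0) (hC : 0 < Cμ3)
    -- `Cμ3` is a doubling constant for dilation by `3A₀²`
    (h3 : ∀ (x : X) (r : ℝ), 0 < r →
      μ {y | d x y < 3 * A ^ 2 * r} ≤ (Cμ3 : ℝ≥0∞) * μ {y | d x y < r}) :
    ∀ (x : X) (r R : ℝ), 0 < r → r < R →
      (1 + (Cμ3 : ℝ≥0∞)⁻¹) * μ {y | d x y < r} ≤ μ {y | d x y < R} ∨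
      {y | d x y < R / (2 * A)} \ {y | d x y < 2 * A * r} = ∅ := by
  intro x r R hr hrR
  have hA0 : (0:ℝ) < A := lt_of_lt_of_le one_pos hA
  by_cases hann : {y | d x y < R / (2 * A)} \ {y | d x y < 2 * A * r} = ∅
  · exact Or.inr hann
  left
  obtain ⟨z, hz⟩ := Set.nonempty_iff_ne_empty.2 hann
  simp only [Set.mem_diff, Set.mem_setOf_eq, not_lt] at hz
  obtain ⟨hzR, hzr⟩ := hz
  set s : ℝ := d x z with hs
  have hs_pos : 0 < s := lt_of_lt_of_le (by positivity) hzr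
  set ρ : ℝ := s / (2 * A) with hρ
  have hρ_pos : 0 < ρ := by positivity
  have hρ2A : 2 * A * ρ = s := by
    rw [hρ]; field_simp
  have hsR : 2 * A * s < R := by
    have h := (lt_div_iff₀ (show (0:ℝ) < 2 * A by positivity)).1 hzR
    nlinarith
  -- B(z,ρ) ⊆ B(x,R)
  have hsub1 : {y | d z y < ρ} ⊆ {y | d x y < R} := by
    intro y hy
    simp only [Set.mem_setOf_eq] at hy ⊢
    have h1 : d x y ≤ A * (s + d z y) := htri x y z
    nlinarith [mul_lt_mul_of_pos_left hy hA0, hnn z y]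
  -- B(z,ρ) disjoint from B(x,r)
  have hdisj : Disjoint {y | d x y < r} {y | d z y < ρ} := by
    rw [Set.disjoint_left]
    intro y hy hy'
    simp only [Set.mem_setOf_eq] at hy hy'
    have h1 : s ≤ A * (d x y + d y z) := htri x z y
    have h2 : d y z = d z y := hsymm y z
    have h3' : 2 * A * r ≤ s := hzr
    rw [h2] at h1
    -- A*(d x y + d z y) < A*(r + ρ) ≤ 2*A*ρ = s ≤ A*(d x y + d z y): contradiction
    nlinarith [mul_lt_mul_of_pos_left (add_lt_add hy hy') hA0]
  -- B(x,r) ⊆ B(z, 3A²ρ)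
  have hsub2 : {y | d x y < r} ⊆ {y | d z y < 3 * A ^ 2 * ρ} := by
    intro y hy
    simp only [Set.mem_setOf_eq] at hy ⊢
    have h1 : d z y ≤ A * (d z x + d x y) := htri z y x
    have h2 : d z x = s := (hsymm z x).trans rfl
    have : 3 * A ^ 2 * ρ = (3 / 2) * A * s := by
      field_simp [hρ]; linarith [hρ2A]
    rw [this]
    nlinarith [mul_lt_mul_of_pos_left hy hA0, hnn x y, mul_le_mul_of_nonneg_left hzr (le_of_lt hA0)]
  -- measure estimates
  have hkey : μ {y | d x y < r} ≤ (Cμ3 : ℝ≥0∞) * μ {y | d z y < ρ} :=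
    le_trans (measure_mono hsub2) (h3 z ρ hρ_pos)
  have hC' : ((Cμ3 : ℝ≥0∞))⁻¹ * μ {y | d x y < r} ≤ μ {y | d z y < ρ} := by
    rw [ENNReal.inv_mul_le_iff (by exact_mod_cast hC.ne') (by simp)]
    exact hkey
  have hunion : μ {y | d x y < r} + μ {y | d z y < ρ} ≤ μ {y | d x y < R} := by
    rw [← measure_union hdisj (hballs z ρ)]
    apply measure_mono
    apply Set.union_subset _ hsub1
    intro y hy
    simp only [Set.mem_setOf_eq] at hy ⊢
    linarith
  calc (1 + (Cμ3 : ℝ≥0∞)⁻¹) * μ {y | d x y < r}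
      = μ {y | d x y < r} + (Cμ3 : ℝ≥0∞)⁻¹ * μ {y | d x y < r} := by
        rw [add_mul, one_mul]
    _ ≤ μ {y | d x y < r} + μ {y | d z y < ρ} := add_le_add_right hC' _
    _ ≤ μ {y | d x y < R} := hunion
end

section
/- The spline functions s^k_α satisfy the two-sided support bounds: 1_{B(x^k_α, (1/8)A₀^{-3}δ^k)}(x) ≤ s^k_α(x) ≤ 1_{B(x^k_α, 8A₀^5 δ^k)}(x), and the partition-of-unity property Σ_α s^k_α(x) = 1 for every x ∈ X, and interpolation s^k_α(x^k_β) = δ_{αβ}. -/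
open MeasureTheory
open scoped ENNReal

/-- Iterated doubling: an `(1/2)(3/4)^m r`-separated subset of a ball of radius `r`
has at most `N^(m+1)` points. -/
lemma sep_card_bound {X : Type*} (d : X → X → ℝ) (N : ℕ)
    (hnn : ∀ x y, 0 ≤ d x y) (hsymm : ∀ x y, d x y = d y x)
    (hzero : ∀ x y, d x y = 0 ↔ x = y) (hdoub : GeomDoubling d N) :
    ∀ (m : ℕ) (x : X) (r : ℝ) (S : Finset X), (∀ y ∈ S, d x y < r) →
      (∀ a ∈ S, ∀ b ∈ S, a ≠ b → (1/2) * (3/4)^m * r < d a b) → S.card ≤ N ^ (m+1) := by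
  intro m
  induction m with
  | zero =>
    intro x r S hball hsep
    simpa using hdoub x r S hball (fun a ha b hb hab => by
      have := hsep a ha b hb hab; linarith)
  | succ m ih =>
    intro x r S hball hsep
    rcases S.eq_empty_or_nonempty with rfl | ⟨y0, hy0⟩
    · simp
    have hr : 0 < r := lt_of_le_of_lt (hnn x y0) (hball y0 hy0)
    classical
    -- choose a maximal (r/2)-separated subset T of S
    set 𝒯 : Finset (Finset X) :=
      S.powerset.filter (fun T => ∀ a ∈ T, ∀ b ∈ T, a ≠ b → r / 2 < d a b) with h𝒯
    have hne : 𝒯.Nonempty := ⟨∅, by simp [h𝒯]⟩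
    obtain ⟨T, hT𝒯, hTmax⟩ := 𝒯.exists_maximal hne
    rw [h𝒯, Finset.mem_filter, Finset.mem_powerset] at hT𝒯
    obtain ⟨hTS, hTsep⟩ := hT𝒯
    have hTcard : T.card ≤ N :=
      hdoub x r T (fun y hy => hball y (hTS hy)) hTsep
    -- every point of S is within r/2 of some point of T
    have hcov : ∀ y ∈ S, ∃ t ∈ T, d t y ≤ r / 2 := by
      intro y hy
      by_cases hyT : y ∈ T
      · exact ⟨y, hyT, by rw [(hzero y y).mpr rfl]; positivity⟩
      · by_contra hcon
        push_neg at hcon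
        have hins : insert y T ∈ 𝒯 := by
          rw [h𝒯, Finset.mem_filter, Finset.mem_powerset]
          refine ⟨Finset.insert_subset hy hTS, ?_⟩
          intro a ha b hb hab
          rcases Finset.mem_insert.mp ha with rfl | haT
          · rcases Finset.mem_insert.mp hb with rfl | hbT
            · exact absurd rfl hab
            · have := hcon b hbT
              rwa [hsymm a b]
          · rcases Finset.mem_insert.mp hb with rfl | hbT
            · have := hcon a haT; linarith
            · exact hTsep a haT b hbT hab
        exact hyT (hTmax hins (Finset.subset_insert y T) (Finset.mem_insert_self y T))
    -- S is covered by the pieces near points of T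
    have hSsub : S ⊆ T.biUnion (fun t => S.filter (fun y => d t y ≤ r / 2)) := by
      intro y hy
      obtain ⟨t, htT, htd⟩ := hcov y hy
      exact Finset.mem_biUnion.mpr ⟨t, htT, Finset.mem_filter.mpr ⟨hy, htd⟩⟩
    have hpiece : ∀ t ∈ T, (S.filter (fun y => d t y ≤ r / 2)).card ≤ N ^ (m+1) := by
      intro t _
      refine ih t (3/4 * r) _ ?_ ?_
      · intro y hy
        have := (Finset.mem_filter.mp hy).2
        linarith
      · intro a ha b hb hab
        have := hsep a (Finset.mem_filter.mp ha).1 b (Finset.mem_filter.mp hb).1 hab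
        calc (1/2) * (3/4)^m * (3/4 * r) = (1/2) * (3/4)^(m+1) * r := by ring
        _ < d a b := this
    calc S.card ≤ (T.biUnion (fun t => S.filter (fun y => d t y ≤ r / 2))).card :=
          Finset.card_le_card hSsub
      _ ≤ ∑ t ∈ T, (S.filter (fun y => d t y ≤ r / 2)).card := Finset.card_biUnion_le
      _ ≤ ∑ _t ∈ T, N ^ (m+1) := Finset.sum_le_sum hpiece
      _ = T.card * N ^ (m+1) := by simp [Finset.sum_const, mul_comm]
      _ ≤ N * N ^ (m+1) := Nat.mul_le_mul_right _ hTcard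
      _ = N ^ (m+2) := by ring

/-- the splines `s^k_α(x) = ℙ_ω(x ∈ Q̄^k_α(ω))` satisfy the two-sided
support bounds, the partition of unity property, and the interpolation property. -/
theorem spline_basic_properties {X Ω : Type*} [MeasurableSpace Ω]
    (d : X → X → ℝ) (A δ : ℝ) (N : ℕ)
    (hA : 1 ≤ A)
    (hnn : ∀ x y, 0 ≤ d x y)
    (hsymm : ∀ x y, d x y = d y x)
    (hzero : ∀ x y, d x y = 0 ↔ x = y)
    (htri : ∀ x y z, d x y ≤ A * (d x z + d z y))
    (hdoub : GeomDoubling d N)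
    (hδ : 0 < δ) (hδA : δ ≤ 1 / (1000 * A ^ 10))
    (P : Measure Ω) [IsProbabilityMeasure P]
    (ι : ℤ → Type*) (center : ∀ k, ι k → X) (Q : ∀ k, ι k → Ω → Set X)
    -- measurability of the events defining the splines
    (hmeas : ∀ (k : ℤ) (α : ι k) (x : X), MeasurableSet {ω | x ∈ Q k α ω})
    -- the centres of generation `k` are `δ^k`-separated
    (hsep : ∀ (k : ℤ) (α β : ι k), α ≠ β → δ ^ k ≤ d (center k α) (center k β))
    -- the closed cubes of generation `k` cover `X`
    (hcover : ∀ (k : ℤ) (ω : Ω) (x : X), ∃ α, x ∈ Q k α ω)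
    -- comparability of cubes with balls
    (hin : ∀ (k : ℤ) (α : ι k) (ω : Ω) (y : X),
      d (center k α) y < (1 / 8) * A ^ (-3 : ℤ) * δ ^ k → y ∈ Q k α ω)
    (hout : ∀ (k : ℤ) (α : ι k) (ω : Ω) (y : X),
      y ∈ Q k α ω → d (center k α) y < 8 * A ^ 5 * δ ^ k)
    -- overlaps of distinct cubes of the same generation have probability zero
    (hdisj : ∀ (k : ℤ) (x : X),
      P {ω | ∃ α β, α ≠ β ∧ x ∈ Q k α ω ∧ x ∈ Q k β ω} = 0) :
    ∀ (k : ℤ) (α : ι k) (x : X),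
      -- lower indicator bound: `s^k_α = 1` on `B(x^k_α, (1/8)A₀⁻³δ^k)`
      (d (center k α) x < (1 / 8) * A ^ (-3 : ℤ) * δ ^ k →
        (P {ω | x ∈ Q k α ω}).toReal = 1) ∧
      -- upper indicator bound: `s^k_α = 0` outside `B(x^k_α, 8A₀⁵δ^k)`
      (8 * A ^ 5 * δ ^ k ≤ d (center k α) x → (P {ω | x ∈ Q k α ω}).toReal = 0) ∧
      -- partition of unity: `Σ_α s^k_α(x) = 1`
      (∑' β : ι k, (P {ω | x ∈ Q k β ω}).toReal) = 1 ∧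
      -- interpolation: `s^k_α(x^k_β) = δ_{αβ}`
      (∀ β : ι k,
        (α = β → (P {ω | center k β ∈ Q k α ω}).toReal = 1) ∧
        (α ≠ β → (P {ω | center k β ∈ Q k α ω}).toReal = 0)) := by
  classical
  have hA0 : (0:ℝ) < A := lt_of_lt_of_le one_pos hA
  have hδk : ∀ k : ℤ, (0:ℝ) < δ ^ k := fun k => zpow_pos hδ k
  -- lower bound
  have hlow : ∀ (k : ℤ) (α : ι k) (x : X),
      d (center k α) x < (1 / 8) * A ^ (-3 : ℤ) * δ ^ k →
      (P {ω | x ∈ Q k α ω}).toReal = 1 := by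
    intro k α x hx
    have : {ω | x ∈ Q k α ω} = Set.univ := by
      ext ω; simp only [Set.mem_setOf_eq, Set.mem_univ, iff_true]
      exact hin k α ω x hx
    rw [this, measure_univ]; simp
  intro k α x
  refine ⟨hlow k α x, ?_, ?_, ?_⟩
  · -- upper bound
    intro hx
    have : {ω | x ∈ Q k α ω} = (∅ : Set Ω) := by
      ext ω; simp only [Set.mem_setOf_eq, Set.mem_empty_iff_false, iff_false]
      intro h
      exact absurd (hout k α ω x h) (not_lt.mpr hx)
    rw [this, measure_empty]; simp
  · -- partition of unity
    set T : Set (ι k) := {β | ∃ ω, x ∈ Q k β ω} with hT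
    -- the set of relevant centres is finite
    obtain ⟨m, hm⟩ : ∃ m : ℕ, ((3:ℝ)/4) ^ m < 1 / (4 * A ^ 5) :=
      exists_pow_lt_of_lt_one (by positivity) (by norm_num)
    have hcenfin : ((center k) '' T).Finite := by
      by_contra hinf
      rw [← Set.Infinite] at hinf
      obtain ⟨F, hFsub, hFcard⟩ := hinf.exists_subset_card_eq (N ^ (m+1) + 1)
      have : F.card ≤ N ^ (m+1) := by
        refine sep_card_bound d N hnn hsymm hzero hdoub m x (8 * A ^ 5 * δ ^ k) F ?_ ?_
        · intro y hy
          obtain ⟨β, hβ, rfl⟩ := hFsub hy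
          obtain ⟨ω, hω⟩ := hβ
          rw [hsymm]
          exact hout k β ω x hω
        · intro a ha b hb hab
          obtain ⟨βa, hβa, rfl⟩ := hFsub ha
          obtain ⟨βb, hβb, rfl⟩ := hFsub hb
          have hβne : βa ≠ βb := fun h => hab (by rw [h])
          have h1 : δ ^ k ≤ d (center k βa) (center k βb) := hsep k βa βb hβne
          have h2 : (1/2) * ((3:ℝ)/4) ^ m * (8 * A ^ 5 * δ ^ k) < δ ^ k := by
            have key : ((3:ℝ)/4)^m * (4*A^5) < 1 :=
              (lt_div_iff₀ (by positivity)).mp hm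
            calc (1/2) * ((3:ℝ)/4) ^ m * (8 * A ^ 5 * δ ^ k)
                = (((3:ℝ)/4)^m * (4*A^5)) * δ^k := by ring
              _ < 1 * δ^k := mul_lt_mul_of_pos_right key (hδk k)
              _ = δ^k := one_mul _
          linarith
      omega
    have hinj : Set.InjOn (center k) T := by
      intro a _ b _ hab
      by_contra hne
      have := hsep k a b hne
      rw [hab, (hzero _ _).mpr rfl] at this
      exact absurd this (not_le.mpr (hδk k))
    have hTfin : T.Finite := Set.Finite.of_finite_image hcenfin hinj
    set F : Finset (ι k) := hTfin.toFinset with hF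
    have hzero' : ∀ β ∉ F, (P {ω | x ∈ Q k β ω}).toReal = 0 := by
      intro β hβ
      have : {ω | x ∈ Q k β ω} = (∅ : Set Ω) := by
        ext ω; simp only [Set.mem_setOf_eq, Set.mem_empty_iff_false, iff_false]
        intro h
        exact hβ (hTfin.mem_toFinset.mpr ⟨ω, h⟩)
      rw [this, measure_empty]; simp
    rw [tsum_eq_sum hzero']
    have hsum : ∑ β ∈ F, P {ω | x ∈ Q k β ω} = 1 := by
      rw [← measure_biUnion_finset₀]
      · have : (⋃ β ∈ F, {ω | x ∈ Q k β ω}) = Set.univ := by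
          ext ω
          simp only [Set.mem_iUnion, Set.mem_setOf_eq, Set.mem_univ, iff_true]
          obtain ⟨β, hβ⟩ := hcover k ω x
          exact ⟨β, hTfin.mem_toFinset.mpr ⟨ω, hβ⟩, hβ⟩
        rw [this, measure_univ]
      · intro a _ b _ hab
        refine measure_mono_null ?_ (hdisj k x)
        intro ω hω
        exact ⟨a, b, hab, hω.1, hω.2⟩
      · intro b _
        exact (hmeas k b x).nullMeasurableSet
    calc ∑ β ∈ F, (P {ω | x ∈ Q k β ω}).toReal
        = (∑ β ∈ F, P {ω | x ∈ Q k β ω}).toReal :=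
          (ENNReal.toReal_sum (fun β _ => measure_ne_top P _)).symm
      _ = 1 := by rw [hsum]; simp
  · -- interpolation
    intro β
    constructor
    · rintro rfl
      refine hlow k α (center k α) ?_
      rw [(hzero _ _).mpr rfl]
      positivity
    · intro hab
      have : {ω | center k β ∈ Q k α ω} ⊆ {ω | ∃ a b, a ≠ b ∧ center k β ∈ Q k a ω ∧ center k β ∈ Q k b ω} := by
        intro ω hω
        refine ⟨α, β, hab, hω, ?_⟩
        refine hin k β ω (center k β) ?_
        rw [(hzero _ _).mpr rfl]
        positivity
      rw [measure_mono_null this (hdisj k (center k β))]; simp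
end

section
/- The splines are Hölder-continuous: there exist constants C and η > 0 (depending only on the geometric constants) such that |s^k_α(x) − s^k_α(y)| ≤ C (d(x,y)/δ^k)^η for all x, y ∈ X and all k, α. -/
open MeasureTheory
open scoped ENNReal

/-- Hölder-continuity of the splines `s^k_α(x) = ℙ_ω(x ∈ Q̄^k_α(ω))`,
deduced from the small boundary layer property of the random dyadic cubes. -/
theorem spline_holder_continuity {X Ω : Type*} [MeasurableSpace Ω]
    (d : X → X → ℝ) (A δ : ℝ)
    (hA : 1 ≤ A)
    (hnn : ∀ x y, 0 ≤ d x y)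
    (hsymm : ∀ x y, d x y = d y x)
    (hzero : ∀ x y, d x y = 0 ↔ x = y)
    (htri : ∀ x y z, d x y ≤ A * (d x z + d z y))
    (hδ : 0 < δ) (hδA : δ ≤ 1 / (1000 * A ^ 10))
    (P : Measure Ω) [IsProbabilityMeasure P]
    (ι : ℤ → Type*)
    (Qbar Qopen : ∀ k, ι k → Ω → Set X)    -- closed and open random dyadic cubes
    (hsub : ∀ (k : ℤ) (α : ι k) (ω : Ω), Qopen k α ω ⊆ Qbar k α ω)
    (η C₀ : ℝ) (hη : 0 < η) (hC₀ : 0 ≤ C₀)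
    -- small boundary layer property:
    -- `ℙ_ω(x ∈ ∪_α ∂_ε Q^k_α(ω)) ≤ C₀ ε^η`, where
    -- `∂_ε Q^k_α(ω) = {y ∈ Q̄^k_α(ω) : d(y, (Q̃^k_α(ω))ᶜ) < ε δ^k}`
    (hSB : ∀ (k : ℤ) (x : X) (ε : ℝ), 0 < ε →
      P {ω | ∃ α, x ∈ Qbar k α ω ∧ ∃ z, z ∉ Qopen k α ω ∧ d x z < ε * δ ^ k}
        ≤ ENNReal.ofReal (C₀ * ε ^ η)) :
    ∃ C : ℝ, ∀ (k : ℤ) (α : ι k) (x y : X),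
      |(P {ω | x ∈ Qbar k α ω}).toReal - (P {ω | y ∈ Qbar k α ω}).toReal|
        ≤ C * (d x y / δ ^ k) ^ η := by

  refine ⟨C₀ * 2 ^ η, fun k α x y => ?_⟩
  have hδk : (0:ℝ) < δ ^ k := zpow_pos hδ k
  by_cases hd : d x y = 0
  · have : x = y := (hzero x y).mp hd
    subst this
    simp [hd, Real.zero_rpow hη.ne']
  · have hD : 0 < d x y := lt_of_le_of_ne (hnn x y) (Ne.symm hd)
    set ε : ℝ := 2 * d x y / δ ^ k with hε
    have hεpos : 0 < ε := by positivity
    -- key one-sided bound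
    have key : ∀ u v : X, d u v = d x y →
        (P {ω | u ∈ Qbar k α ω}).toReal
          ≤ (P {ω | v ∈ Qbar k α ω}).toReal + C₀ * ε ^ η := by
      intro u v huv
      have hsubset : {ω | u ∈ Qbar k α ω} \ {ω | v ∈ Qbar k α ω} ⊆
          {ω | ∃ β, u ∈ Qbar k β ω ∧ ∃ z, z ∉ Qopen k β ω ∧ d u z < ε * δ ^ k} := by
        intro ω hω
        refine ⟨α, hω.1, v, fun hv => hω.2 (hsub k α ω hv), ?_⟩
        have : ε * δ ^ k = 2 * d x y := by
          rw [hε, div_mul_cancel₀ _ hδk.ne']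
        rw [this, huv]
        linarith
      have h1 : P {ω | u ∈ Qbar k α ω}
          ≤ P {ω | v ∈ Qbar k α ω} + ENNReal.ofReal (C₀ * ε ^ η) := by
        calc P {ω | u ∈ Qbar k α ω}
            ≤ P ({ω | v ∈ Qbar k α ω} ∪ ({ω | u ∈ Qbar k α ω} \ {ω | v ∈ Qbar k α ω})) :=
              measure_mono (fun ω h => by
                by_cases hv : ω ∈ {ω | v ∈ Qbar k α ω}
                · exact Or.inl hv
                · exact Or.inr ⟨h, hv⟩)
          _ ≤ P {ω | v ∈ Qbar k α ω} + P ({ω | u ∈ Qbar k α ω} \ {ω | v ∈ Qbar k α ω}) :=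
              measure_union_le _ _
          _ ≤ P {ω | v ∈ Qbar k α ω} + ENNReal.ofReal (C₀ * ε ^ η) :=
              add_le_add le_rfl (le_trans (measure_mono hsubset) (hSB k u ε hεpos))
      have hfin1 : P {ω | u ∈ Qbar k α ω} ≠ ⊤ := measure_ne_top P _
      have hfin2 : P {ω | v ∈ Qbar k α ω} ≠ ⊤ := measure_ne_top P _
      have := ENNReal.toReal_mono (by finiteness) h1
      rwa [ENNReal.toReal_add hfin2 ENNReal.ofReal_ne_top,
        ENNReal.toReal_ofReal (by positivity)] at this
    have hCε : C₀ * ε ^ η = C₀ * 2 ^ η * (d x y / δ ^ k) ^ η := by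
      have : ε = 2 * (d x y / δ ^ k) := by rw [hε]; ring
      rw [this, Real.mul_rpow (by norm_num) (by positivity), mul_assoc]
    rw [abs_sub_le_iff]
    constructor
    · have := key x y rfl
      rw [hCε] at this
      linarith
    · have := key y x (hsymm y x)
      rw [hCε] at this
      linarith
end
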